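/- Normalization of the multivariate q-Gaussian: for 0 ≤ q < 1 and a symmetric positive definite matrix Σ ∈ ℝ^{n×n}, ∫_{ℝ^n} [1 - (1-q)·xᵀΣ⁻¹x/((n+4)-(n+2)q)]_+^{1/(1-q)} dx = det(Σ)^{1/2} (π((n+4)-(n+2)q)/(1-q))^{n/2} · Γ((2-q)/(1-q)) / Γ((2-q)/(1-q) + n/2), where Γ is the Gamma function. -/

import Mathlib

open Real MeasureTheory Matrix
open Set Metric

/-- The `q`-exponential: `exp_q(x) = [1 + (1-q)x]_+ ^ (1/(1-q))`. -/
noncomputable def qexp (q x : ℝ) : ℝ := (max (1 + (1 - q) * x) 0) ^ (1 / (1 - q))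



lemma realBeta {u v : ℝ} (hu : 0 < u) (hv : 0 < v) :
    ∫ x in (0:ℝ)..1, x ^ (u - 1) * (1 - x) ^ (v - 1)
      = Real.Gamma u * Real.Gamma v / Real.Gamma (u + v) := by
  have h := Complex.Gamma_mul_Gamma_eq_betaIntegral (s := (u:ℂ)) (t := (v:ℂ))
    (by simpa using hu) (by simpa using hv)
  have hB : Complex.betaIntegral (u:ℂ) (v:ℂ)
      = ((∫ x in (0:ℝ)..1, x ^ (u - 1) * (1 - x) ^ (v - 1) : ℝ) : ℂ) := by
    have hcong : (∫ x in (0:ℝ)..1, (x:ℂ) ^ ((u:ℂ) - 1) * (1 - (x:ℂ)) ^ ((v:ℂ) - 1))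
        = ∫ x in (0:ℝ)..1, ((x ^ (u - 1) * (1 - x) ^ (v - 1) : ℝ) : ℂ) := by
      refine intervalIntegral.integral_congr fun x hx => ?_
      rw [uIcc_of_le zero_le_one] at hx
      push_cast
      rw [Complex.ofReal_cpow hx.1 (u-1), Complex.ofReal_cpow (by linarith [hx.2]) (v-1)]
      push_cast
      ring
    rw [Complex.betaIntegral, hcong]
    exact RCLike.intervalIntegral_ofReal (𝕜 := ℂ) (f := fun x => x ^ (u - 1) * (1 - x) ^ (v - 1))
  rw [hB, ← Complex.ofReal_add, Complex.Gamma_ofReal, Complex.Gamma_ofReal,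
    Complex.Gamma_ofReal, ← Complex.ofReal_mul, ← Complex.ofReal_mul] at h
  have := Complex.ofReal_injective h
  have hG : Real.Gamma (u + v) ≠ 0 := (Real.Gamma_pos_of_pos (by linarith)).ne'
  field_simp
  linarith [this]

lemma Kint {u p : ℝ} (hu : 0 < u) (hp : 0 < p) :
    ∫ t in Ioi (0:ℝ), t ^ (u - 1) * (max (1 - t) 0) ^ p
      = Real.Gamma u * Real.Gamma (p + 1) / Real.Gamma (u + p + 1) := by
  set f : ℝ → ℝ := fun t => t ^ (u - 1) * (max (1 - t) 0) ^ p with hf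
  have h1 : ∫ t in Ioi (0:ℝ), f t = ∫ t in Ioc (0:ℝ) 1, f t := by
    calc ∫ t in Ioi (0:ℝ), f t = ∫ t in Ioi (0:ℝ), (Ioc (0:ℝ) 1).indicator f t := by
          refine setIntegral_congr_fun measurableSet_Ioi fun t ht => ?_
          by_cases h : t ≤ 1
          · rw [Set.indicator_of_mem (mem_Ioc.mpr ⟨ht, h⟩)]
          · rw [Set.indicator_of_notMem (by simp [h])]
            rw [hf]
            simp only []
            rw [max_eq_right (by linarith), Real.zero_rpow hp.ne', mul_zero]
      _ = ∫ t in Ioi (0:ℝ) ∩ Ioc (0:ℝ) 1, f t := setIntegral_indicator measurableSet_Ioc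
      _ = ∫ t in Ioc (0:ℝ) 1, f t := by rw [inter_eq_right.mpr Ioc_subset_Ioi_self]
  have h2 : ∫ t in Ioc (0:ℝ) 1, f t
      = ∫ t in (0:ℝ)..1, t ^ (u - 1) * (1 - t) ^ ((p + 1) - 1) := by
    rw [intervalIntegral.integral_of_le zero_le_one]
    refine setIntegral_congr_fun measurableSet_Ioc fun t ht => ?_
    rw [hf]
    simp only []
    rw [max_eq_left (by linarith [ht.2]), add_sub_cancel_right]
  rw [h1, h2, realBeta hu (by linarith)]
  ring_nf

lemma Jint {n : ℕ} (hn : 0 < n) {p : ℝ} (hp : 0 < p) :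
    ∫ y in Ioi (0:ℝ), (y:ℝ) ^ (n - 1) * (max (1 - y ^ 2) 0) ^ p
      = (1/2) * (Real.Gamma ((n:ℝ)/2) * Real.Gamma (p + 1) / Real.Gamma ((n:ℝ)/2 + p + 1)) := by
  set g : ℝ → ℝ := fun t => t ^ ((n:ℝ)/2 - 1) * (max (1 - t) 0) ^ p with hg
  have h0 : ∫ x in Ioi (0:ℝ), ((2:ℝ) * x ^ ((2:ℝ) - 1)) • g (x ^ (2:ℝ))
      = ∫ t in Ioi (0:ℝ), g t := integral_comp_rpow_Ioi_of_pos two_pos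
  have h1 : ∫ x in Ioi (0:ℝ), ((2:ℝ) * x ^ ((2:ℝ) - 1)) • g (x ^ (2:ℝ))
      = ∫ x in Ioi (0:ℝ), 2 * ((x:ℝ) ^ (n - 1) * (max (1 - x ^ 2) 0) ^ p) := by
    refine setIntegral_congr_fun measurableSet_Ioi fun x hx => ?_
    have hx' : (0:ℝ) < x := hx
    have hx2 : x ^ (2:ℝ) = x ^ (2:ℕ) := Real.rpow_two x
    have key : x ^ ((2:ℝ) - 1) * (x ^ (2:ℝ)) ^ ((n:ℝ)/2 - 1) = x ^ ((n:ℕ) - 1 : ℕ) := by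
      rw [← Real.rpow_natCast x ((n:ℕ) - 1 : ℕ), Nat.cast_sub hn,
        ← Real.rpow_mul hx'.le, ← Real.rpow_add hx']
      norm_num
      ring_nf
    rw [smul_eq_mul, hg]
    simp only []
    calc 2 * x ^ ((2:ℝ) - 1) * ((x ^ (2:ℝ)) ^ ((n:ℝ)/2 - 1) * (max (1 - x ^ (2:ℝ)) 0) ^ p)
        = 2 * ((x ^ ((2:ℝ) - 1) * (x ^ (2:ℝ)) ^ ((n:ℝ)/2 - 1)) * (max (1 - x ^ (2:ℝ)) 0) ^ p) := by
          ring
      _ = 2 * (x ^ ((n:ℕ) - 1 : ℕ) * (max (1 - x ^ 2) 0) ^ p) := by rw [key, hx2]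
  have h2 : ∫ x in Ioi (0:ℝ), 2 * ((x:ℝ) ^ (n - 1) * (max (1 - x ^ 2) 0) ^ p)
      = 2 * ∫ x in Ioi (0:ℝ), (x:ℝ) ^ (n - 1) * (max (1 - x ^ 2) 0) ^ p :=
    integral_const_mul 2 _
  have h3 := Kint (u := (n:ℝ)/2) (by positivity) hp
  rw [h1, h2, h3] at h0
  linarith [h0]

lemma Jint_scaled {n : ℕ} (hn : 0 < n) {p a : ℝ} (hp : 0 < p) (ha : 0 < a) :
    ∫ y in Ioi (0:ℝ), (y:ℝ) ^ (n - 1) * (max (1 - a * y ^ 2) 0) ^ p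
      = (Real.sqrt a ^ n)⁻¹ *
        ((1/2) * (Real.Gamma ((n:ℝ)/2) * Real.Gamma (p + 1) / Real.Gamma ((n:ℝ)/2 + p + 1))) := by
  set b := Real.sqrt a with hb
  have hb0 : 0 < b := Real.sqrt_pos.mpr ha
  have hb2 : b ^ 2 = a := Real.sq_sqrt ha.le
  set g : ℝ → ℝ := fun s => s ^ (n - 1) * (max (1 - s ^ 2) 0) ^ p with hg
  have h0 : (∫ x in Ioi (0:ℝ), g (b * x)) = b⁻¹ • ∫ x in Ioi (b * 0), g x :=
    integral_comp_mul_left_Ioi g 0 hb0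
  rw [mul_zero] at h0
  have h1 : ∫ y in Ioi (0:ℝ), (y:ℝ) ^ (n - 1) * (max (1 - a * y ^ 2) 0) ^ p
      = ∫ y in Ioi (0:ℝ), (b ^ (n-1))⁻¹ * g (b * y) := by
    refine setIntegral_congr_fun measurableSet_Ioi fun y _ => ?_
    rw [hg]
    simp only []
    have hby : (b * y) ^ 2 = a * y ^ 2 := by rw [mul_pow, hb2]
    rw [hby]
    field_simp
    ring
  have hbn : (b:ℝ) ^ n = b ^ (n-1) * b := by
    rw [← pow_succ]
    congr 1
    omega
  rw [h1, integral_const_mul, h0, Jint hn hp, smul_eq_mul, hbn, mul_inv]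
  ring

lemma euclid_int {n : ℕ} (hn : 0 < n) {p a : ℝ} (hp : 0 < p) (ha : 0 < a) :
    ∫ x : EuclideanSpace ℝ (Fin n), (max (1 - a * ‖x‖ ^ 2) 0) ^ p
      = π ^ ((n:ℝ)/2) * (Real.sqrt a ^ n)⁻¹ *
          (Real.Gamma (p + 1) / Real.Gamma (p + 1 + (n:ℝ)/2)) := by
  haveI : Nonempty (Fin n) := Fin.pos_iff_nonempty.mp hn
  haveI : Nontrivial (EuclideanSpace ℝ (Fin n)) := inferInstance
  have hdim : Module.finrank ℝ (EuclideanSpace ℝ (Fin n)) = n := finrank_euclideanSpace_fin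
  have h0 := MeasureTheory.integral_fun_norm_addHaar
    (volume : Measure (EuclideanSpace ℝ (Fin n)))
    (fun r : ℝ => (max (1 - a * r ^ 2) 0) ^ p)
  rw [hdim] at h0
  have hvol : ((volume : Measure (EuclideanSpace ℝ (Fin n))) (ball 0 1)).toReal
      = Real.sqrt π ^ n / Real.Gamma ((n:ℝ)/2 + 1) := by
    rw [EuclideanSpace.volume_ball (Fin n) 0 1]
    simp only [Fintype.card_fin, ENNReal.ofReal_one, one_pow, one_mul]
    rw [ENNReal.toReal_ofReal (div_nonneg (by positivity) (Real.Gamma_pos_of_pos (by positivity)).le)]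
  rw [h0, measureReal_def, hvol]
  have h1 : ∫ y in Ioi (0:ℝ), y ^ (n - 1) • (max (1 - a * y ^ 2) 0) ^ p
      = ∫ y in Ioi (0:ℝ), (y:ℝ) ^ (n - 1) * (max (1 - a * y ^ 2) 0) ^ p := by
    simp [smul_eq_mul]
  rw [h1, Jint_scaled hn hp ha]
  have hπ : Real.sqrt π ^ n = π ^ ((n:ℝ)/2) := by
    rw [Real.sqrt_eq_rpow, ← Real.rpow_natCast (π ^ ((1:ℝ)/2)) n, ← Real.rpow_mul pi_pos.le]
    ring_nf
  have hΓhalf : Real.Gamma ((n:ℝ)/2) ≠ 0 := (Real.Gamma_pos_of_pos (by positivity)).ne'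
  have hΓ1 : Real.Gamma ((n:ℝ)/2 + 1) = ((n:ℝ)/2) * Real.Gamma ((n:ℝ)/2) :=
    Real.Gamma_add_one (by positivity)
  have harg : (n:ℝ)/2 + p + 1 = p + 1 + (n:ℝ)/2 := by ring
  rw [nsmul_eq_mul, smul_eq_mul, hπ, hΓ1, harg]
  have hn' : (n:ℝ) ≠ 0 := Nat.cast_ne_zero.mpr hn.ne'
  field_simp


lemma psd_det_nonneg {m : Type*} [Fintype m] [DecidableEq m]
    {M : Matrix m m ℝ} (hM : M.PosSemidef) : 0 ≤ M.det := by
  rw [hM.1.det_eq_prod_eigenvalues]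
  exact Finset.prod_nonneg fun i _ => by
    simpa using hM.eigenvalues_nonneg i

open scoped MatrixOrder in
lemma psd_exists_sqrt {m : Type*} [Fintype m] [DecidableEq m]
    {M : Matrix m m ℝ} (hM : M.PosSemidef) : ∃ R : Matrix m m ℝ, R * R = M ∧ R.PosSemidef :=
  ⟨CFC.sqrt M, CFC.sqrt_mul_sqrt_self M hM.nonneg, (CFC.sqrt_nonneg M).posSemidef⟩

/-- Normalization of the multivariate `q`-Gaussian: for `0 ≤ q < 1` and a symmetric
positive definite `Σ`, the integral of
`exp_q(-xᵀ Σ⁻¹ x / ((n+4)-(n+2)q))` over `ℝⁿ` equals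
`det(Σ)^(1/2) (π((n+4)-(n+2)q)/(1-q))^(n/2) Γ((2-q)/(1-q)) / Γ((2-q)/(1-q)+n/2)`. -/
theorem qGaussian_normalization (n : ℕ) (q : ℝ) (hq0 : 0 ≤ q) (hq1 : q < 1)
    (S : Matrix (Fin n) (Fin n) ℝ) (hS : S.PosDef) :
    ∫ x : Fin n → ℝ,
        qexp q (-(x ⬝ᵥ (S⁻¹ *ᵥ x)) / (((n : ℝ) + 4) - ((n : ℝ) + 2) * q)) =
      S.det ^ ((1 : ℝ) / 2) *
        (π * (((n : ℝ) + 4) - ((n : ℝ) + 2) * q) / (1 - q)) ^ ((n : ℝ) / 2) *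
        (Real.Gamma ((2 - q) / (1 - q)) /
          Real.Gamma ((2 - q) / (1 - q) + (n : ℝ) / 2)) := by
  have hq : (0:ℝ) < 1 - q := by linarith
  set c : ℝ := ((n : ℝ) + 4) - ((n : ℝ) + 2) * q with hcdef
  have hc : 0 < c := by
    have hn0 : (0:ℝ) ≤ (n:ℝ) := Nat.cast_nonneg n
    nlinarith
  set p : ℝ := 1 / (1 - q) with hpdef
  have hp : 0 < p := by positivity
  have hpq : (2 - q) / (1 - q) = p + 1 := by
    rw [hpdef]; field_simp; ring
  rcases Nat.eq_zero_or_pos n with hn | hn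
  · subst hn
    have hint : ∀ x : Fin 0 → ℝ,
        qexp q (-(x ⬝ᵥ (S⁻¹ *ᵥ x)) / c) = 1 := by
      intro x
      have : x ⬝ᵥ (S⁻¹ *ᵥ x) = 0 := by simp [dotProduct]
      rw [this, qexp]
      norm_num
    simp only [hint]
    rw [integral_const]
    have hvol : (volume : Measure (Fin 0 → ℝ)) Set.univ = 1 := by
      simp [MeasureTheory.volume_pi, Measure.pi_univ]
    rw [measureReal_def, hvol]
    have hdet : S.det = 1 := Matrix.det_fin_zero
    have hΓ : Real.Gamma ((2 - q) / (1 - q)) ≠ 0 := by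
      rw [hpq]; exact (Real.Gamma_pos_of_pos (by linarith)).ne'
    simp [hdet, Real.one_rpow, Real.rpow_zero, div_self hΓ]
  -- main case
  have hSinv : (S⁻¹).PosDef := hS.inv
  have hPSD : (S⁻¹).PosSemidef := hSinv.posSemidef
  obtain ⟨R, hRR', hRpsd'⟩ := psd_exists_sqrt hPSD
  have hRR : R * R = S⁻¹ := hRR'
  have hRpsd : R.PosSemidef := hRpsd'
  have hsym : Rᵀ = R := by
    rw [← Matrix.conjTranspose_eq_transpose_of_trivial]
    exact hRpsd.1
  have hdetS : 0 < S.det := hS.det_pos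
  have hRdet2 : R.det ^ 2 = S.det⁻¹ := by
    rw [pow_two, ← Matrix.det_mul, hRR, Matrix.det_nonsing_inv, Ring.inverse_eq_inv']
  have hRdet_nonneg : 0 ≤ R.det := psd_det_nonneg hRpsd
  have hRdet_pos : 0 < R.det := by
    rcases hRdet_nonneg.lt_or_eq with h | h
    · exact h
    · exfalso
      have : S.det⁻¹ = 0 := by rw [← hRdet2, ← h]; ring
      exact absurd this (by positivity)
  have hRdet0 : R.det ≠ 0 := hRdet_pos.ne'
  set a : ℝ := (1 - q) / c with hadef
  have ha : 0 < a := by positivity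
  -- quadratic form
  have hquad : ∀ x : Fin n → ℝ, x ⬝ᵥ (S⁻¹ *ᵥ x) = (R *ᵥ x) ⬝ᵥ (R *ᵥ x) := by
    intro x
    have hv : x ᵥ* R = R *ᵥ x := by
      conv_lhs => rw [← hsym]
      rw [Matrix.vecMul_transpose]
    rw [← hRR, ← Matrix.mulVec_mulVec, Matrix.dotProduct_mulVec, hv]
  set g : (Fin n → ℝ) → ℝ := fun y => (max (1 - a * (y ⬝ᵥ y)) 0) ^ p with hgdef
  have hint : ∀ x : Fin n → ℝ,
      qexp q (-(x ⬝ᵥ (S⁻¹ *ᵥ x)) / c) = g (R *ᵥ x) := by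
    intro x
    rw [qexp, hquad x, hgdef]
    have : 1 + (1 - q) * (-((R *ᵥ x) ⬝ᵥ (R *ᵥ x)) / c)
        = 1 - a * ((R *ᵥ x) ⬝ᵥ (R *ᵥ x)) := by
      rw [hadef]; field_simp; ring
    rw [this, hpdef]
  -- change of variables
  have hLdet : LinearMap.det (Matrix.toLin' R) ≠ 0 := by
    rw [LinearMap.det_toLin']; exact hRdet0
  set e : (Fin n → ℝ) ≃ᵐ (Fin n → ℝ) :=
    ((Matrix.toLin' R).equivOfDetNeZero hLdet).toContinuousLinearEquiv.toHomeomorph.toMeasurableEquiv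
    with hedef
  have hecoe : (⇑e : (Fin n → ℝ) → (Fin n → ℝ)) = ⇑(Matrix.toLin' R) := rfl
  have hmap : Measure.map e volume = ENNReal.ofReal |R.det|⁻¹ • volume := by
    rw [show ⇑e = ⇑(Matrix.toLin' R) from hecoe]
    have h := Real.map_matrix_volume_pi_eq_smul_volume_pi hRdet0
    rwa [abs_inv] at h
  have hCoV : ∫ x : Fin n → ℝ, g (R *ᵥ x) = |R.det|⁻¹ * ∫ y : Fin n → ℝ, g y := by
    have h1 : ∀ x, g (R *ᵥ x) = g (e x) := by
      intro x
      rw [hecoe, Matrix.toLin'_apply]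
    simp_rw [h1]
    rw [← MeasureTheory.integral_map_equiv e g, hmap, integral_smul_measure,
      ENNReal.toReal_ofReal (by positivity), smul_eq_mul]
  -- euclidean transfer
  set e2 := (MeasurableEquiv.toLp 2 (Fin n → ℝ)).symm with he2
  have hE : ∫ y : Fin n → ℝ, g y
      = ∫ x : EuclideanSpace ℝ (Fin n), (max (1 - a * ‖x‖ ^ 2) 0) ^ p := by
    rw [← (EuclideanSpace.volume_preserving_symm_measurableEquiv_toLp (Fin n)).integral_comp
      e2.measurableEmbedding g]
    refine integral_congr_ae (Filter.Eventually.of_forall fun x => ?_)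
    rw [hgdef]
    have hdot : (e2 x) ⬝ᵥ (e2 x) = ‖x‖ ^ 2 := by
      rw [EuclideanSpace.norm_eq, Real.sq_sqrt (by positivity)]
      simp [dotProduct, he2,
        Real.norm_eq_abs, sq_abs, pow_two]
    simp only [← he2, hdot]
  have hEuclid := euclid_int hn hp ha
  -- assemble
  simp_rw [hint]
  rw [hCoV, hE, hEuclid]
  -- numbers
  have hdetR : |R.det|⁻¹ = S.det ^ ((1:ℝ)/2) := by
    rw [abs_of_nonneg hRdet_nonneg]
    have hR : R.det = Real.sqrt S.det⁻¹ := by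
      rw [← Real.sqrt_sq hRdet_nonneg, hRdet2]
    rw [hR, Real.sqrt_inv, inv_inv, Real.sqrt_eq_rpow]
  have hsa : (Real.sqrt a ^ n)⁻¹ = (c / (1 - q)) ^ ((n:ℝ)/2) := by
    have h1 : Real.sqrt a ^ n = a ^ ((n:ℝ)/2) := by
      rw [Real.sqrt_eq_rpow, ← Real.rpow_natCast (a ^ ((1:ℝ)/2)) n,
        ← Real.rpow_mul ha.le]
      ring_nf
    rw [h1, ← Real.inv_rpow ha.le, hadef, inv_div]
  have hmul : (π * c / (1 - q)) ^ ((n:ℝ)/2)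
      = π ^ ((n:ℝ)/2) * (c / (1 - q)) ^ ((n:ℝ)/2) := by
    rw [mul_div_assoc, Real.mul_rpow pi_pos.le (by positivity)]
  rw [hdetR, hsa, hpq, hmul]
  ring
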